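/- For the annulus Ω_r = {r < |z| < 1}, the Bergman metric at r^{1/5} satisfies lim_{r→0⁺} F_B^{Ω_r}(r^{1/5},1)²/log(1/r) = 2. -/

import Mathlib

open Real Filter Topology

/-- `β₀(r,t) = B_r(t,t)`: diagonal Bergman kernel of the annulus `{r < |z| < 1}` at a point
of modulus `t`:
`B_r(z,z) = (1/π)[Σ_{n≠-1} (n+1)|z|^{2n}/(1-r^{2n+2}) + |z|⁻²/(2 log(1/r))]`. -/
noncomputable def beta0 (r t : ℝ) : ℝ :=
  (1/π) * ∑' n : ℤ, if n = -1 then t ^ (-2 : ℤ) / (2 * Real.log (1/r))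
    else ((n : ℝ) + 1) * t ^ (2*n) / (1 - r ^ (2*n+2))

/-- `β₁(r,t) = ∂_z B_r(z,z)` at `z = t > 0`. -/
noncomputable def beta1 (r t : ℝ) : ℝ :=
  (1/π) * ∑' n : ℤ, if n = -1 then -(t ^ (-3 : ℤ)) / (2 * Real.log (1/r))
    else ((n : ℝ) + 1) * (n : ℝ) * t ^ (2*n-1) / (1 - r ^ (2*n+2))

/-- `β₂(r,t) = ∂_z∂_z̄ B_r(z,z)` at `z = t > 0`. -/
noncomputable def beta2 (r t : ℝ) : ℝ :=
  (1/π) * ∑' n : ℤ, if n = -1 then t ^ (-4 : ℤ) / (2 * Real.log (1/r))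
    else ((n : ℝ) + 1) * (n : ℝ)^2 * t ^ (2*n-2) / (1 - r ^ (2*n+2))

/-- The squared Bergman metric of the annulus at the point `t` in the unit direction:
`F_B(t,1)² = (β₀β₂ - β₁²)/β₀²`. -/
noncomputable def bergmanMetricSq (r t : ℝ) : ℝ :=
  (beta0 r t * beta2 r t - (beta1 r t)^2) / (beta0 r t)^2

namespace BergAux


/-- master term `c * s^p / (1 - s^q)` -/
noncomputable def master (c : ℝ) (p q : ℤ) (s : ℝ) : ℝ := c * s ^ p / (1 - s ^ q)

lemma master_zero (p q : ℤ) : master 0 p q = fun _ => 0 := by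
  funext s; simp [master]

/-- limit when `p > 0`, `q > 0`: tends to 0. -/
lemma master_lim_pos {p q : ℤ} (c : ℝ) (hp : 0 < p) (hq : 0 < q) :
    Tendsto (master c p q) (𝓝[>] (0:ℝ)) (𝓝 0) := by
  have hp' : ∀ s : ℝ, s ^ p = s ^ p.toNat := fun s => by
    rw [← zpow_natCast s, Int.toNat_of_nonneg hp.le]
  have hq' : ∀ s : ℝ, s ^ q = s ^ q.toNat := fun s => by
    rw [← zpow_natCast s, Int.toNat_of_nonneg hq.le]
  have heq : master c p q = fun s : ℝ => c * s ^ p.toNat / (1 - s ^ q.toNat) := by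
    funext s; rw [master, hp', hq']
  rw [heq]
  have hc : ContinuousAt (fun s : ℝ => c * s ^ p.toNat / (1 - s ^ q.toNat)) 0 := by
    apply ContinuousAt.div (by fun_prop) (by fun_prop)
    simp [zero_pow (by omega : q.toNat ≠ 0)]
  have h0 : c * (0:ℝ) ^ p.toNat / (1 - (0:ℝ) ^ q.toNat) = 0 := by
    simp [zero_pow (by omega : p.toNat ≠ 0)]
  simpa [h0] using hc.tendsto.mono_left nhdsWithin_le_nhds

/-- limit when `p = 0`, `q > 0`: tends to `c`. -/
lemma master_lim_zero {q : ℤ} (c : ℝ) (hq : 0 < q) :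
    Tendsto (master c 0 q) (𝓝[>] (0:ℝ)) (𝓝 c) := by
  have hq' : ∀ s : ℝ, s ^ q = s ^ q.toNat := fun s => by
    rw [← zpow_natCast s, Int.toNat_of_nonneg hq.le]
  have heq : master c 0 q = fun s : ℝ => c / (1 - s ^ q.toNat) := by
    funext s; rw [master, hq', zpow_zero, mul_one]
  rw [heq]
  have hc : ContinuousAt (fun s : ℝ => c / (1 - s ^ q.toNat)) 0 := by
    apply ContinuousAt.div (by fun_prop) (by fun_prop)
    simp [zero_pow (by omega : q.toNat ≠ 0)]
  have h0 : c / (1 - (0:ℝ) ^ q.toNat) = c := by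
    simp [zero_pow (by omega : q.toNat ≠ 0)]
  simpa [h0] using hc.tendsto.mono_left nhdsWithin_le_nhds

/-- rewriting for negative `q`: on `0 < s < 1`,
`master c p q s = c * s^((p-q).toNat) / (s^((-q).toNat) - 1)`. -/
lemma master_neg_eq {p q : ℤ} (c : ℝ) (hq : q < 0) (hpq : 0 ≤ p - q) {s : ℝ}
    (hs : 0 < s) (hs1 : s < 1) :
    master c p q s = c * s ^ (p - q).toNat / (s ^ (-q).toNat - 1) := by
  have hsne : s ≠ 0 := hs.ne'
  have hk : ((-q).toNat : ℤ) = -q := Int.toNat_of_nonneg (by omega)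
  have hj : ((p - q).toNat : ℤ) = p - q := Int.toNat_of_nonneg hpq
  have hq' : s ^ q = (s ^ (-q).toNat)⁻¹ := by
    rw [← zpow_natCast s, hk, zpow_neg, inv_inv]
  have hp' : s ^ p = s ^ (p - q).toNat * s ^ q := by
    rw [← zpow_natCast s, hj, ← zpow_add₀ hsne]; congr 1; ring
  have hpow : s ^ (-q).toNat < 1 := pow_lt_one₀ hs.le hs1 (by omega)
  have h1 : s ^ (-q).toNat - 1 ≠ 0 := by nlinarith
  have h2 : (1 : ℝ) - s ^ q ≠ 0 := by
    rw [hq']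
    have : (1:ℝ) < (s ^ (-q).toNat)⁻¹ := by
      rw [lt_inv_comm₀ (by norm_num) (by positivity)]; simpa using hpow
    nlinarith
  have hne : s ^ (-q).toNat ≠ 0 := by positivity
  rw [master, hp', hq']
  rw [show (1:ℝ) - (s ^ (-q).toNat)⁻¹ = (s ^ (-q).toNat - 1) / s ^ (-q).toNat by
    field_simp]
  rw [div_div_eq_mul_div]
  congr 1
  field_simp

/-- limit when `q < 0 < p - q`: tends to 0. -/
lemma master_lim_neg {p q : ℤ} (c : ℝ) (hq : q < 0) (hpq : 0 < p - q) :
    Tendsto (master c p q) (𝓝[>] (0:ℝ)) (𝓝 0) := by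
  have hc : ContinuousAt (fun s : ℝ => c * s ^ (p - q).toNat / (s ^ (-q).toNat - 1)) 0 := by
    apply ContinuousAt.div (by fun_prop) (by fun_prop)
    simp [zero_pow (by omega : (-q).toNat ≠ 0)]
  have h0 : c * (0:ℝ) ^ (p-q).toNat / ((0:ℝ) ^ (-q).toNat - 1) = 0 := by
    simp [zero_pow (by omega : (p-q).toNat ≠ 0)]
  have ht := hc.tendsto.mono_left (nhdsWithin_le_nhds (s := Set.Ioi (0:ℝ)))
  rw [h0] at ht
  refine ht.congr' ?_
  filter_upwards [Ioo_mem_nhdsGT (by norm_num : (0:ℝ) < 1)] with s hs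
  exact (master_neg_eq c hq hpq.le hs.1 hs.2).symm


lemma half_pow {k m : ℕ} (h : 2*m ≤ k + 2) : ((1/2:ℝ))^k ≤ 4 * (1/4)^m := by
  have h1 : ((1/2:ℝ))^k = (1/2:ℝ)^(k+2) * 4 := by rw [pow_add]; ring
  have h2 : ((1/2:ℝ))^(k+2) ≤ (1/2:ℝ)^(2*m) :=
    pow_le_pow_of_le_one (by norm_num) (by norm_num) h
  have h3 : ((1/2:ℝ))^(2*m) = (1/4:ℝ)^m := by rw [pow_mul]; norm_num
  rw [h1]; rw [h3] at h2; linarith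

lemma master_abs_le_pos {c : ℝ} {p q : ℤ} (hp : 0 ≤ p) (hq : 10 ≤ q) {s : ℝ}
    (hs : 0 < s) (hs2 : s ≤ 1/2) : |master c p q s| ≤ 2 * |c| * s ^ p.toNat := by
  have hq' : s ^ q = s ^ q.toNat := by
    rw [← zpow_natCast s, Int.toNat_of_nonneg (by omega)]
  have hp' : s ^ p = s ^ p.toNat := by
    rw [← zpow_natCast s, Int.toNat_of_nonneg hp]
  have hpow : s ^ q.toNat ≤ 1/2 := by
    calc s ^ q.toNat ≤ (1/2:ℝ) ^ q.toNat := pow_le_pow_left₀ hs.le hs2 _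
    _ ≤ (1/2:ℝ)^1 := pow_le_pow_of_le_one (by norm_num) (by norm_num) (by omega)
    _ = 1/2 := pow_one _
  have hden : (1:ℝ)/2 ≤ 1 - s ^ q := by rw [hq']; linarith
  rw [master, abs_div, abs_of_pos (by linarith : (0:ℝ) < 1 - s ^ q), abs_mul, hp',
    abs_of_pos (by positivity : (0:ℝ) < s ^ p.toNat)]
  calc |c| * s ^ p.toNat / (1 - s ^ q) ≤ |c| * s ^ p.toNat / (1/2) :=
        div_le_div_of_nonneg_left (by positivity) (by norm_num) hden
  _ = 2 * |c| * s ^ p.toNat := by ring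

lemma master_abs_le_neg {c : ℝ} {p q : ℤ} (hq : q ≤ -10) (hpq : 0 ≤ p - q) {s : ℝ}
    (hs : 0 < s) (hs2 : s ≤ 1/2) : |master c p q s| ≤ 2 * |c| * s ^ (p - q).toNat := by
  rw [master_neg_eq c (by omega) hpq hs (by linarith)]
  have hpow : s ^ (-q).toNat ≤ 1/2 := by
    calc s ^ (-q).toNat ≤ (1/2:ℝ) ^ (-q).toNat := pow_le_pow_left₀ hs.le hs2 _
    _ ≤ (1/2:ℝ)^1 := pow_le_pow_of_le_one (by norm_num) (by norm_num) (by omega)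
    _ = 1/2 := pow_one _
  rw [abs_div, abs_of_neg (by linarith : s ^ (-q).toNat - 1 < 0), abs_mul,
    abs_of_pos (by positivity : (0:ℝ) < s ^ (p-q).toNat)]
  calc |c| * s ^ (p-q).toNat / -(s ^ (-q).toNat - 1) ≤ |c| * s ^ (p-q).toNat / (1/2) :=
        div_le_div_of_nonneg_left (by positivity) (by norm_num) (by linarith)
  _ = 2 * |c| * s ^ (p-q).toNat := by ring

noncomputable def Bnd (n : ℤ) : ℝ := 8 * ((n.natAbs : ℝ) + 1)^3 * (1/4)^(n.natAbs)

lemma Bnd_nonneg (n : ℤ) : 0 ≤ Bnd n := by unfold Bnd; positivity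

lemma glue {c : ℝ} {e m : ℕ} {s : ℝ} (hc : |c| ≤ ((m:ℝ)+1)^3) (he : 2*m ≤ e + 2)
    (hs : 0 < s) (hs2 : s ≤ 1/2) :
    2 * |c| * s ^ e ≤ 8 * ((m:ℝ)+1)^3 * (1/4)^m := by
  have h1 : s ^ e ≤ (1/2:ℝ)^e := pow_le_pow_left₀ hs.le hs2 _
  have h2 : ((1/2:ℝ))^e ≤ 4 * (1/4)^m := half_pow he
  have h3 : (0:ℝ) ≤ (1/4:ℝ)^m := by positivity
  nlinarith [abs_nonneg c, pow_pos hs e]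

lemma summable_Bnd : Summable Bnd := by
  have base : Summable (fun m : ℕ => ((m:ℝ)+1)^3 * (1/4)^m) := by
    have h := summable_pow_mul_geometric_of_norm_lt_one (R := ℝ) 3
      (r := 1/4) (by rw [Real.norm_eq_abs, abs_of_nonneg (by norm_num : (0:ℝ) ≤ 1/4)]; norm_num)
    have h2 : Summable (fun m : ℕ => ((m+1:ℕ):ℝ)^3 * (1/4:ℝ)^(m+1)) :=
      (summable_nat_add_iff 1).2 h
    have h3 := h2.mul_left 4
    refine h3.congr fun m => ?_
    push_cast
    ring
  have hgen : Summable (fun m : ℕ => 8 * (((m:ℝ))+1)^3 * (1/4:ℝ)^m) := by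
    refine (base.mul_left 8).congr fun m => by ring
  apply Summable.of_nat_of_neg
  · refine hgen.congr fun m => ?_
    show 8 * ((m:ℝ)+1)^3 * (1/4:ℝ)^m = Bnd (m:ℤ)
    unfold Bnd
    rw [Int.natAbs_natCast]
  · refine hgen.congr fun m => ?_
    show 8 * ((m:ℝ)+1)^3 * (1/4:ℝ)^m = Bnd (-(m:ℤ))
    unfold Bnd
    rw [Int.natAbs_neg, Int.natAbs_natCast]

noncomputable def aa (s : ℝ) (n : ℤ) : ℝ :=
  if n = -1 then 0 else master ((n:ℝ)+1) (2*n) (10*n+10) s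
noncomputable def bb (s : ℝ) (n : ℤ) : ℝ :=
  if n = -1 then 0 else master (((n:ℝ)+1)*n) (2*n-1) (10*n+10) s
noncomputable def cc (s : ℝ) (n : ℤ) : ℝ :=
  if n = -1 then 0 else master (((n:ℝ)+1)*(n:ℝ)^2) (2*n-2) (10*n+10) s

lemma natAbs_cast (n : ℤ) : ((n.natAbs : ℝ)) = |(n:ℝ)| := by
  rw [Nat.cast_natAbs]
  exact Int.cast_abs

lemma coeff_le (n : ℤ) : |(n:ℝ)+1| ≤ (n.natAbs:ℝ)+1 ∧ |(n:ℝ)| ≤ (n.natAbs:ℝ)+1 := by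
  rw [natAbs_cast]
  constructor
  · calc |(n:ℝ)+1| ≤ |(n:ℝ)| + |(1:ℝ)| := abs_add_le _ _
    _ = |(n:ℝ)| + 1 := by rw [abs_one]
  · linarith [abs_nonneg ((n:ℝ))]


lemma one_le_M (n : ℤ) : (1:ℝ) ≤ (n.natAbs:ℝ)+1 := by
  have : (0:ℝ) ≤ (n.natAbs:ℝ) := Nat.cast_nonneg _
  linarith

lemma coeff_cube_aa (n : ℤ) : |(n:ℝ)+1| ≤ ((n.natAbs:ℝ)+1)^3 :=
  (coeff_le n).1.trans (le_self_pow₀ (one_le_M n) (by norm_num))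

lemma coeff_cube_bb (n : ℤ) : |((n:ℝ)+1)*(n:ℝ)| ≤ ((n.natAbs:ℝ)+1)^3 := by
  rw [abs_mul]
  have h1 := (coeff_le n).1
  have h2 := (coeff_le n).2
  have hM := one_le_M n
  calc |(n:ℝ)+1| * |(n:ℝ)| ≤ ((n.natAbs:ℝ)+1) * ((n.natAbs:ℝ)+1) := by
        apply mul_le_mul h1 h2 (abs_nonneg _) (by linarith)
  _ ≤ ((n.natAbs:ℝ)+1)^3 := by nlinarith

lemma coeff_cube_cc (n : ℤ) : |((n:ℝ)+1)*(n:ℝ)^2| ≤ ((n.natAbs:ℝ)+1)^3 := by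
  rw [abs_mul, abs_pow]
  have h1 := (coeff_le n).1
  have h2 := (coeff_le n).2
  have hM := one_le_M n
  have h3 : |(n:ℝ)|^2 ≤ ((n.natAbs:ℝ)+1)^2 := by nlinarith [abs_nonneg ((n:ℝ))]
  calc |(n:ℝ)+1| * |(n:ℝ)|^2 ≤ ((n.natAbs:ℝ)+1) * ((n.natAbs:ℝ)+1)^2 := by
        apply mul_le_mul h1 h3 (by positivity) (by linarith)
  _ = ((n.natAbs:ℝ)+1)^3 := by ring

lemma aa_abs_le {s : ℝ} (hs : 0 < s) (hs2 : s ≤ 1/2) (n : ℤ) : |aa s n| ≤ Bnd n := by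
  unfold aa Bnd
  rcases eq_or_ne n (-1) with rfl | h1
  · norm_num
  rw [if_neg h1]
  rcases le_or_gt 0 n with hn | hn
  · refine (master_abs_le_pos (by omega) (by omega) hs hs2).trans ?_
    exact glue (coeff_cube_aa n) (by omega) hs hs2
  · refine (master_abs_le_neg (by omega) (by omega) hs hs2).trans ?_
    exact glue (coeff_cube_aa n) (by omega) hs hs2

lemma bb_abs_le {s : ℝ} (hs : 0 < s) (hs2 : s ≤ 1/2) (n : ℤ) : |bb s n| ≤ Bnd n := by
  unfold bb Bnd
  rcases eq_or_ne n (-1) with rfl | h1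
  · norm_num
  rw [if_neg h1]
  rcases eq_or_ne n 0 with rfl | h0
  · simp only [master]
    norm_num
  rcases le_or_gt 0 n with hn | hn
  · refine (master_abs_le_pos (by omega) (by omega) hs hs2).trans ?_
    exact glue (coeff_cube_bb n) (by omega) hs hs2
  · refine (master_abs_le_neg (by omega) (by omega) hs hs2).trans ?_
    exact glue (coeff_cube_bb n) (by omega) hs hs2

lemma cc_abs_le {s : ℝ} (hs : 0 < s) (hs2 : s ≤ 1/2) (n : ℤ) : |cc s n| ≤ Bnd n := by
  unfold cc Bnd
  rcases eq_or_ne n (-1) with rfl | h1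
  · norm_num
  rw [if_neg h1]
  rcases eq_or_ne n 0 with rfl | h0
  · simp only [master]
    norm_num
  rcases le_or_gt 0 n with hn | hn
  · refine (master_abs_le_pos (by omega) (by omega) hs hs2).trans ?_
    exact glue (coeff_cube_cc n) (by omega) hs hs2
  · refine (master_abs_le_neg (by omega) (by omega) hs hs2).trans ?_
    exact glue (coeff_cube_cc n) (by omega) hs hs2

lemma summable_aa {s : ℝ} (hs : 0 < s) (hs2 : s ≤ 1/2) : Summable (aa s) :=
  summable_Bnd.of_norm_bounded fun n => by
    rw [Real.norm_eq_abs]; exact aa_abs_le hs hs2 n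
lemma summable_bb {s : ℝ} (hs : 0 < s) (hs2 : s ≤ 1/2) : Summable (bb s) :=
  summable_Bnd.of_norm_bounded fun n => by
    rw [Real.norm_eq_abs]; exact bb_abs_le hs hs2 n
lemma summable_cc {s : ℝ} (hs : 0 < s) (hs2 : s ≤ 1/2) : Summable (cc s) :=
  summable_Bnd.of_norm_bounded fun n => by
    rw [Real.norm_eq_abs]; exact cc_abs_le hs hs2 n

lemma aa_tendsto (n : ℤ) :
    Tendsto (fun s => aa s n) (𝓝[>] (0:ℝ)) (𝓝 (if n = 0 then 1 else 0)) := by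
  unfold aa
  rcases eq_or_ne n (-1) with rfl | h1
  · norm_num
  simp only [if_neg h1]
  rcases eq_or_ne n 0 with rfl | h0
  · rw [if_pos rfl]
    have := master_lim_zero ((0:ℝ)+1) (by norm_num : (0:ℤ) < 10*0+10)
    norm_num at this ⊢
    exact this
  rw [if_neg h0]
  rcases le_or_gt 0 n with hn | hn
  · exact master_lim_pos _ (by omega) (by omega)
  · exact master_lim_neg _ (by omega) (by omega)

lemma bb_tendsto (n : ℤ) :
    Tendsto (fun s => bb s n) (𝓝[>] (0:ℝ)) (𝓝 0) := by
  unfold bb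
  rcases eq_or_ne n (-1) with rfl | h1
  · norm_num
  simp only [if_neg h1]
  rcases eq_or_ne n 0 with rfl | h0
  · simp only [master]
    norm_num
  rcases le_or_gt 0 n with hn | hn
  · exact master_lim_pos _ (by omega) (by omega)
  · exact master_lim_neg _ (by omega) (by omega)

lemma cc_tendsto (n : ℤ) :
    Tendsto (fun s => cc s n) (𝓝[>] (0:ℝ)) (𝓝 (if n = 1 then 2 else 0)) := by
  unfold cc
  rcases eq_or_ne n (-1) with rfl | h1
  · norm_num
  simp only [if_neg h1]
  rcases eq_or_ne n 0 with rfl | h0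
  · simp only [master]
    norm_num
  rcases eq_or_ne n 1 with rfl | hone
  · rw [if_pos rfl]
    have := master_lim_zero (((1:ℝ)+1)*(1:ℝ)^2) (by norm_num : (0:ℤ) < 10*1+10)
    norm_num at this ⊢
    exact this
  rw [if_neg hone]
  rcases le_or_gt 0 n with hn | hn
  · exact master_lim_pos _ (by omega) (by omega)
  · exact master_lim_neg _ (by omega) (by omega)

lemma tsum_aa_tendsto :
    Tendsto (fun s => ∑' n : ℤ, aa s n) (𝓝[>] (0:ℝ)) (𝓝 1) := by
  have h := tendsto_tsum_of_dominated_convergence (f := fun s (n : ℤ) => aa s n)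
    (g := fun n : ℤ => if n = 0 then (1:ℝ) else 0) (bound := Bnd) summable_Bnd
    aa_tendsto ?_
  · simpa [tsum_ite_eq] using h
  · filter_upwards [Ioc_mem_nhdsGT
      (by norm_num : (0:ℝ) < 1/2)] with s hs n
    rw [Real.norm_eq_abs]
    exact aa_abs_le hs.1 hs.2 n

lemma tsum_bb_tendsto :
    Tendsto (fun s => ∑' n : ℤ, bb s n) (𝓝[>] (0:ℝ)) (𝓝 0) := by
  have h := tendsto_tsum_of_dominated_convergence (f := fun s (n : ℤ) => bb s n)
    (g := fun _ : ℤ => (0:ℝ)) (bound := Bnd) summable_Bnd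
    bb_tendsto ?_
  · simpa using h
  · filter_upwards [Ioc_mem_nhdsGT
      (by norm_num : (0:ℝ) < 1/2)] with s hs n
    rw [Real.norm_eq_abs]
    exact bb_abs_le hs.1 hs.2 n

lemma tsum_cc_tendsto :
    Tendsto (fun s => ∑' n : ℤ, cc s n) (𝓝[>] (0:ℝ)) (𝓝 2) := by
  have h := tendsto_tsum_of_dominated_convergence (f := fun s (n : ℤ) => cc s n)
    (g := fun n : ℤ => if n = 1 then (2:ℝ) else 0) (bound := Bnd) summable_Bnd
    cc_tendsto ?_
  · simpa [tsum_ite_eq] using h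
  · filter_upwards [Ioc_mem_nhdsGT
      (by norm_num : (0:ℝ) < 1/2)] with s hs n
    rw [Real.norm_eq_abs]
    exact cc_abs_le hs.1 hs.2 n


lemma pow5 (s : ℝ) (m : ℤ) : (s^5) ^ m = s ^ (5*m) := by
  rw [← zpow_natCast s 5, ← zpow_mul]
  norm_num

lemma beta0_eq {s : ℝ} (hs : 0 < s) (hs2 : s ≤ 1/2) :
    beta0 (s^5) s =
      (1/π) * ((s^2)⁻¹ / (2 * Real.log (1/s^5)) + ∑' n : ℤ, aa s n) := by
  unfold beta0
  congr 1
  have hfun : ∀ n : ℤ, (if n = -1 then s ^ (-2:ℤ) / (2 * Real.log (1/s^5))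
        else ((n:ℝ)+1) * s^(2*n) / (1 - (s^5)^(2*n+2)))
      = (if n = -1 then (s^2)⁻¹ / (2 * Real.log (1/s^5)) else 0) + aa s n := by
    intro n
    by_cases h : n = -1
    · subst h
      simp only [if_pos rfl, aa, add_zero]
      rw [show ((-2:ℤ)) = -(2:ℕ) by norm_num, zpow_neg, zpow_natCast]
      simp
    · simp only [if_neg h, aa, master, zero_add]
      rw [show (10*n+10 : ℤ) = 5*(2*n+2) by ring, ← pow5 s]
  rw [tsum_congr hfun,
    Summable.tsum_add ((hasSum_ite_eq (-1 : ℤ) ((s^2)⁻¹ / (2 * Real.log (1/s^5)))).summable)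
      (summable_aa hs hs2),
    tsum_ite_eq]

lemma beta1_eq {s : ℝ} (hs : 0 < s) (hs2 : s ≤ 1/2) :
    beta1 (s^5) s =
      (1/π) * (-((s^3)⁻¹ / (2 * Real.log (1/s^5))) + ∑' n : ℤ, bb s n) := by
  unfold beta1
  congr 1
  have hfun : ∀ n : ℤ, (if n = -1 then -(s ^ (-3:ℤ)) / (2 * Real.log (1/s^5))
        else ((n:ℝ)+1) * (n:ℝ) * s^(2*n-1) / (1 - (s^5)^(2*n+2)))
      = (if n = -1 then -((s^3)⁻¹ / (2 * Real.log (1/s^5))) else 0) + bb s n := by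
    intro n
    by_cases h : n = -1
    · subst h
      simp only [if_pos rfl, bb, add_zero]
      rw [show ((-3:ℤ)) = -(3:ℕ) by norm_num, zpow_neg, zpow_natCast, neg_div]
      simp
    · simp only [if_neg h, bb, master, zero_add]
      rw [show (10*n+10 : ℤ) = 5*(2*n+2) by ring, ← pow5 s]
  rw [tsum_congr hfun,
    Summable.tsum_add ((hasSum_ite_eq (-1 : ℤ) (-((s^3)⁻¹ / (2 * Real.log (1/s^5))))).summable)
      (summable_bb hs hs2),
    tsum_ite_eq]

lemma beta2_eq {s : ℝ} (hs : 0 < s) (hs2 : s ≤ 1/2) :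
    beta2 (s^5) s =
      (1/π) * ((s^4)⁻¹ / (2 * Real.log (1/s^5)) + ∑' n : ℤ, cc s n) := by
  unfold beta2
  congr 1
  have hfun : ∀ n : ℤ, (if n = -1 then s ^ (-4:ℤ) / (2 * Real.log (1/s^5))
        else ((n:ℝ)+1) * (n:ℝ)^2 * s^(2*n-2) / (1 - (s^5)^(2*n+2)))
      = (if n = -1 then (s^4)⁻¹ / (2 * Real.log (1/s^5)) else 0) + cc s n := by
    intro n
    by_cases h : n = -1
    · subst h
      simp only [if_pos rfl, cc, add_zero]
      rw [show ((-4:ℤ)) = -(4:ℕ) by norm_num, zpow_neg, zpow_natCast]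
      simp
    · simp only [if_neg h, cc, master, zero_add]
      rw [show (10*n+10 : ℤ) = 5*(2*n+2) by ring, ← pow5 s]
  rw [tsum_congr hfun,
    Summable.tsum_add ((hasSum_ite_eq (-1 : ℤ) ((s^4)⁻¹ / (2 * Real.log (1/s^5)))).summable)
      (summable_cc hs hs2),
    tsum_ite_eq]

lemma log_eq (s : ℝ) : Real.log (1/s^5) = -(5 * Real.log s) := by
  rw [one_div, Real.log_inv, Real.log_pow]
  norm_num

lemma metric_eq {s : ℝ} (hs : 0 < s) (hs2 : s ≤ 1/2) (hApos : 0 < ∑' n : ℤ, aa s n) :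
    bergmanMetricSq (s^5) s / Real.log (1/s^5) =
      (2*(s^2 * (∑' n : ℤ, cc s n) + (∑' n : ℤ, aa s n) + 2*s*(∑' n : ℤ, bb s n))
        + 4*((Real.log (1/s^5))*s^4)*((∑' n : ℤ, aa s n)*(∑' n : ℤ, cc s n)
          - (∑' n : ℤ, bb s n)^2))
      / (1 + 2*((Real.log (1/s^5))*s^2)*(∑' n : ℤ, aa s n))^2 := by
  have hL : 0 < Real.log (1/s^5) := by
    apply Real.log_pos
    rw [lt_div_iff₀ (by positivity)]
    nlinarith [pow_lt_one₀ hs.le (by linarith : s < 1) (by norm_num : (5:ℕ) ≠ 0),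
      pow_pos hs 5]
  set A := ∑' n : ℤ, aa s n with hA
  set B := ∑' n : ℤ, bb s n with hB
  set C := ∑' n : ℤ, cc s n with hC
  set L := Real.log (1/s^5) with hLdef
  have hsne : s ≠ 0 := hs.ne'
  have hπ : (π : ℝ) ≠ 0 := Real.pi_ne_zero
  have hP : (s^2)⁻¹ / (2*L) + A ≠ 0 := by positivity
  have hden : 1 + 2*(L*s^2)*A ≠ 0 := by positivity
  rw [bergmanMetricSq, beta0_eq hs hs2, beta1_eq hs hs2, beta2_eq hs hs2,
    ← hA, ← hB, ← hC, ← hLdef]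
  field_simp
  ring

end BergAux


/-- For the annulus `Ω_r = {r < |z| < 1}`, the Bergman metric at `r^{1/5}` satisfies
`lim_{r→0⁺} F_B^{Ω_r}(r^{1/5},1)²/log(1/r) = 2`. -/
theorem bergman_metric_annulus_at_fifth_root :
    Tendsto (fun r : ℝ => bergmanMetricSq r (r ^ ((1:ℝ)/5)) / Real.log (1/r))
      (𝓝[>] (0:ℝ)) (𝓝 2) := by
  classical
  have hid : Tendsto (fun s : ℝ => s) (𝓝[>] (0:ℝ)) (𝓝 0) :=
    tendsto_id.mono_left nhdsWithin_le_nhds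
  have hs2lim : Tendsto (fun s : ℝ => s^2) (𝓝[>] (0:ℝ)) (𝓝 0) := by
    have := ((continuous_pow 2).tendsto (0:ℝ)).mono_left
      (nhdsWithin_le_nhds (s := Set.Ioi (0:ℝ)))
    simpa using this
  have hlogmul : ∀ k : ℕ, k ≠ 0 →
      Tendsto (fun s : ℝ => Real.log (1/s^5) * s^k) (𝓝[>] (0:ℝ)) (𝓝 0) := by
    intro k hk
    have h := tendsto_log_mul_rpow_nhdsGT_zero (r := (k:ℝ)) (by positivity)
    have h2 : Tendsto (fun s : ℝ => Real.log s * s^k) (𝓝[>] (0:ℝ)) (𝓝 0) := by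
      refine h.congr fun s => ?_
      rw [Real.rpow_natCast]
    have h3 := (h2.const_mul (-5 : ℝ))
    refine (by simpa using h3 : Tendsto (fun s : ℝ => -5 * (Real.log s * s^k))
      (𝓝[>] (0:ℝ)) (𝓝 0)).congr fun s => ?_
    rw [BergAux.log_eq]
    ring
  have hL2 := hlogmul 2 (by norm_num)
  have hL4 := hlogmul 4 (by norm_num)
  have hA := BergAux.tsum_aa_tendsto
  have hB := BergAux.tsum_bb_tendsto
  have hC := BergAux.tsum_cc_tendsto
  have hnum : Tendsto (fun s : ℝ =>
      2*(s^2 * (∑' n : ℤ, BergAux.cc s n) + (∑' n : ℤ, BergAux.aa s n)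
        + 2*s*(∑' n : ℤ, BergAux.bb s n))
      + 4*((Real.log (1/s^5))*s^4)*((∑' n : ℤ, BergAux.aa s n)*(∑' n : ℤ, BergAux.cc s n)
          - (∑' n : ℤ, BergAux.bb s n)^2)) (𝓝[>] (0:ℝ)) (𝓝 2) := by
    have h := ((((hs2lim.mul hC).add hA).add ((hid.const_mul 2).mul hB)).const_mul 2).add
      ((hL4.const_mul 4).mul ((hA.mul hC).sub (hB.pow 2)))
    rw [show 𝓝 (2:ℝ) = 𝓝 (2*((0:ℝ)*2 + 1 + 2*0*0) + 4*0*(1*2 - 0^2)) from by norm_num]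
    exact h
  have hden : Tendsto (fun s : ℝ =>
      (1 + 2*((Real.log (1/s^5))*s^2)*(∑' n : ℤ, BergAux.aa s n))^2)
      (𝓝[>] (0:ℝ)) (𝓝 1) := by
    have h := ((tendsto_const_nhds (x := (1:ℝ))).add ((hL2.const_mul 2).mul hA)).pow 2
    rw [show 𝓝 (1:ℝ) = 𝓝 ((1 + 2*(0:ℝ)*1)^2) from by norm_num]
    exact h
  have hratio := hnum.div hden (by norm_num)
  rw [show (2:ℝ)/1 = 2 by norm_num] at hratio
  have key : Tendsto (fun s : ℝ => bergmanMetricSq (s^5) s / Real.log (1/s^5))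
      (𝓝[>] (0:ℝ)) (𝓝 2) := by
    refine Tendsto.congr' ?_ hratio
    filter_upwards [Ioc_mem_nhdsGT
        (by norm_num : (0:ℝ) < 1/2),
      hA.eventually (eventually_gt_nhds (by norm_num : (0:ℝ) < 1))] with s hs hA0
    exact (BergAux.metric_eq hs.1 hs.2 hA0).symm
  have hmap : Tendsto (fun r : ℝ => r ^ ((1:ℝ)/5)) (𝓝[>] (0:ℝ)) (𝓝[>] (0:ℝ)) := by
    rw [tendsto_nhdsWithin_iff]
    constructor
    · have hc : ContinuousAt (fun r : ℝ => r ^ ((1:ℝ)/5)) 0 :=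
        Real.continuousAt_rpow_const 0 _ (Or.inr (by norm_num))
      have := hc.tendsto.mono_left (nhdsWithin_le_nhds (s := Set.Ioi (0:ℝ)))
      simpa [Real.zero_rpow (by norm_num : ((1:ℝ)/5) ≠ 0)] using this
    · filter_upwards [self_mem_nhdsWithin] with r hr
      exact Real.rpow_pos_of_pos hr _
  have hcomp := key.comp hmap
  refine Tendsto.congr' ?_ hcomp
  filter_upwards [self_mem_nhdsWithin] with r hr
  have h5 : (r ^ ((1:ℝ)/5))^(5:ℕ) = r := by
    rw [← Real.rpow_natCast (r ^ ((1:ℝ)/5)) 5, ← Real.rpow_mul (le_of_lt hr)]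
    norm_num
  simp only [Function.comp]
  rw [h5]
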